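/- (The Laplace density lies in the weak Nikol'ski class N̄(1.5, √2/b²).) Let b > 0 and let g(u) := −sgn(u) · (1/(2b²)) · exp(−|u|/b) be the almost-everywhere (weak) derivative of the Laplace density p(t) = (1/(2b)) exp(−|t|/b). Then for every t ∈ ℝ, [ ∫_ℝ ( g(u+t) − g(u) )² du ]^{1/2} ≤ (√2 / b²) · |t|^{1/2}. -/

import Mathlib

open MeasureTheory Set

lemma aux_integrable_exp_neg_abs (a : ℝ) (ha : 0 < a) :
    Integrable fun u : ℝ => Real.exp (-a * |u|) := by
  have hIoi : IntegrableOn (fun u : ℝ => Real.exp (-a * |u|)) (Ioi 0) := by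
    refine (exp_neg_integrableOn_Ioi 0 ha).congr_fun ?_ measurableSet_Ioi
    intro x hx
    show Real.exp (-a * x) = Real.exp (-a * |x|)
    rw [abs_of_pos hx]
  rw [← integrableOn_univ, ← Set.Iio_union_Ici (a := (0:ℝ)), integrableOn_union,
    integrableOn_Ici_iff_integrableOn_Ioi]
  refine ⟨?_, hIoi⟩
  rw [← (Measure.measurePreserving_neg (volume : Measure ℝ)).integrableOn_comp_preimage
      (Homeomorph.neg ℝ).measurableEmbedding]
  simpa [Function.comp_def, abs_neg] using hIoi

lemma aux_integral_exp_neg_abs (a : ℝ) (ha : 0 < a) :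
    ∫ u : ℝ, Real.exp (-a * |u|) = 2 / a := by
  have h1 : ∫ u : ℝ, Real.exp (-a * |u|) = 2 * ∫ x in Ioi (0:ℝ), Real.exp (-a * x) :=
    integral_comp_abs (f := fun x => Real.exp (-a * x))
  have h2 : ∫ x in Ioi (0:ℝ), Real.exp (-(a * x)) =
      a⁻¹ • ∫ x in Ioi (a * 0), Real.exp (-x) :=
    integral_comp_mul_left_Ioi (fun x => Real.exp (-x)) 0 ha
  have h2' : ∫ x in Ioi (0:ℝ), Real.exp (-a * x) = a⁻¹ := by
    rw [mul_zero, integral_exp_neg_Ioi_zero] at h2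
    simpa [neg_mul] using h2
  rw [h1, h2']
  ring

lemma aux_sign_abs_le (x : ℝ) : |Real.sign x| ≤ 1 := by
  rcases Real.sign_apply_eq x with h | h | h <;> rw [h] <;> norm_num

set_option maxHeartbeats 1000000 in
lemma laplace_key (b : ℝ) (hb : 0 < b) (t : ℝ) (ht : 0 ≤ t) :
    (∫ u : ℝ,
        ((-Real.sign (u + t) * (1 / (2 * b ^ 2)) * Real.exp (-|u + t| / b)) -
          (-Real.sign u * (1 / (2 * b ^ 2)) * Real.exp (-|u| / b))) ^ 2)
      ≤ 2 * t / b ^ 4 := by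
  set c : ℝ := 1 / (2 * b ^ 2) with hc
  have hcpos : 0 < c := by positivity
  set r : ℝ := 1 - Real.exp (-t / b) with hrdef
  have hexp1 : Real.exp (-t / b) ≤ 1 := by
    rw [Real.exp_le_one_iff, neg_div]
    exact neg_nonpos.mpr (div_nonneg ht hb.le)
  have hr0 : 0 ≤ r := by simp only [hrdef]; linarith
  have hr1 : r ≤ 1 := by
    have := Real.exp_pos (-t / b)
    simp only [hrdef]; linarith
  have hrt : r ≤ t / b := by
    have h := Real.add_one_le_exp (-(t / b))
    have he : r = 1 - Real.exp (-(t / b)) := by rw [hrdef, neg_div]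
    rw [he]; linarith
  -- the dominating function
  set G : ℝ → ℝ := fun u =>
    c ^ 2 * r ^ 2 * Real.exp (-(2 / b) * |u|) +
    c ^ 2 * r ^ 2 * Real.exp (-(2 / b) * |u + t|) +
    Set.indicator (Icc (-t) 0) (fun _ => 4 * c ^ 2) u with hGdef
  have hint1 : Integrable fun u : ℝ => c ^ 2 * r ^ 2 * Real.exp (-(2 / b) * |u|) :=
    (aux_integrable_exp_neg_abs (2 / b) (by positivity)).const_mul _
  have hint2 : Integrable fun u : ℝ => c ^ 2 * r ^ 2 * Real.exp (-(2 / b) * |u + t|) :=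
    hint1.comp_add_right t
  have hint3 : Integrable (Set.indicator (Icc (-t) 0) (fun _ : ℝ => 4 * c ^ 2)) := by
    refine (IntegrableOn.integrable_indicator ?_ measurableSet_Icc)
    exact (integrableOn_const_iff).mpr (Or.inr measure_Icc_lt_top)
  have hG : Integrable G := (hint1.add hint2).add hint3
  have hFG : ∀ u : ℝ,
      ((-Real.sign (u + t) * c * Real.exp (-|u + t| / b)) -
        (-Real.sign u * c * Real.exp (-|u| / b))) ^ 2 ≤ G u := by
    intro u
    by_cases h1 : 0 < u
    · -- right tail
      have h2 : 0 < u + t := by linarith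
      have e1 : Real.exp (-|u + t| / b) = Real.exp (-|u| / b) * Real.exp (-t / b) := by
        rw [← Real.exp_add, abs_of_pos h1, abs_of_pos h2]; congr 1; ring
      have e2 : Real.exp (-(2 / b) * |u|) = Real.exp (-|u| / b) * Real.exp (-|u| / b) := by
        rw [← Real.exp_add]; congr 1; ring
      have hnm : u ∉ Icc (-t) 0 := fun hm => absurd hm.2 (not_le.mpr h1)
      simp only [hGdef, Set.indicator_of_notMem hnm, add_zero,
        Real.sign_of_pos h1, Real.sign_of_pos h2, e1, e2]
      have key : (-1 * c * (Real.exp (-|u| / b) * Real.exp (-t / b)) -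
          -1 * c * Real.exp (-|u| / b)) ^ 2
          = c ^ 2 * r ^ 2 * (Real.exp (-|u| / b) * Real.exp (-|u| / b)) := by
        rw [hrdef]; ring
      have pos2 : 0 ≤ c ^ 2 * r ^ 2 * Real.exp (-(2 / b) * |u + t|) := by positivity
      linarith [key.le, key.ge]
    · by_cases h2 : u + t < 0
      · -- left tail
        have h3 : u < 0 := by linarith
        have e1 : Real.exp (-|u| / b) = Real.exp (-|u + t| / b) * Real.exp (-t / b) := by
          rw [← Real.exp_add, abs_of_neg h3, abs_of_neg h2]; congr 1; ring
        have e2 : Real.exp (-(2 / b) * |u + t|) =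
            Real.exp (-|u + t| / b) * Real.exp (-|u + t| / b) := by
          rw [← Real.exp_add]; congr 1; ring
        have hnm : u ∉ Icc (-t) 0 := fun hm => absurd hm.1 (not_le.mpr (by linarith))
        simp only [hGdef, Set.indicator_of_notMem hnm, add_zero,
          Real.sign_of_neg h3, Real.sign_of_neg h2, e1, e2]
        have key : (- -1 * c * Real.exp (-|u + t| / b) -
            - -1 * c * (Real.exp (-|u + t| / b) * Real.exp (-t / b))) ^ 2
            = c ^ 2 * r ^ 2 * (Real.exp (-|u + t| / b) * Real.exp (-|u + t| / b)) := by
          rw [hrdef]; ring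
        have pos1 : 0 ≤ c ^ 2 * r ^ 2 * Real.exp (-(2 / b) * |u|) := by positivity
        linarith [key.le, key.ge]
      · -- middle
        have hm : u ∈ Icc (-t) 0 := ⟨by linarith, by linarith⟩
        have habs : ∀ x : ℝ, |(-Real.sign x * c * Real.exp (-|x| / b))| ≤ c := by
          intro x
          have h1 : Real.exp (-|x| / b) ≤ 1 := by
            rw [Real.exp_le_one_iff, neg_div]
            exact neg_nonpos.mpr (div_nonneg (abs_nonneg x) hb.le)
          have h2 := aux_sign_abs_le x
          have h3 : 0 < Real.exp (-|x| / b) := Real.exp_pos _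
          have heq : |(-Real.sign x * c * Real.exp (-|x| / b))|
              = |Real.sign x| * c * Real.exp (-|x| / b) := by
            rw [abs_mul, abs_mul, abs_neg, abs_of_pos hcpos, abs_of_pos h3]
          have h4 : |Real.sign x| * Real.exp (-|x| / b) ≤ 1 :=
            mul_le_one₀ h2 h3.le h1
          rw [heq]
          nlinarith [hcpos.le, abs_nonneg (Real.sign x)]
        have hA := abs_le.mp (habs (u + t))
        have hB := abs_le.mp (habs u)
        have hbound : ((-Real.sign (u + t) * c * Real.exp (-|u + t| / b)) -
            (-Real.sign u * c * Real.exp (-|u| / b))) ^ 2 ≤ 4 * c ^ 2 := by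
          nlinarith [hA.1, hA.2, hB.1, hB.2]
        have pos1 : 0 ≤ c ^ 2 * r ^ 2 * Real.exp (-(2 / b) * |u|) := by positivity
        have pos2 : 0 ≤ c ^ 2 * r ^ 2 * Real.exp (-(2 / b) * |u + t|) := by positivity
        simp only [hGdef, Set.indicator_of_mem hm]
        linarith
  have hmono : (∫ u : ℝ,
      ((-Real.sign (u + t) * c * Real.exp (-|u + t| / b)) -
        (-Real.sign u * c * Real.exp (-|u| / b))) ^ 2) ≤ ∫ u : ℝ, G u :=
    integral_mono_of_nonneg (ae_of_all _ fun u => sq_nonneg _) hG (ae_of_all _ hFG)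
  have e1 : (∫ u : ℝ, c ^ 2 * r ^ 2 * Real.exp (-(2 / b) * |u|))
      = c ^ 2 * r ^ 2 * (2 / (2 / b)) := by
    rw [integral_const_mul, aux_integral_exp_neg_abs (2 / b) (by positivity)]
  have e2 : (∫ u : ℝ, c ^ 2 * r ^ 2 * Real.exp (-(2 / b) * |u + t|))
      = c ^ 2 * r ^ 2 * (2 / (2 / b)) := by
    rw [integral_add_right_eq_self (fun u => c ^ 2 * r ^ 2 * Real.exp (-(2 / b) * |u|)) t]
    exact e1
  have e3 : (∫ u : ℝ, Set.indicator (Icc (-t) 0) (fun _ : ℝ => 4 * c ^ 2) u)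
      = 4 * c ^ 2 * t := by
    rw [integral_indicator_const _ measurableSet_Icc, Real.volume_real_Icc_of_le (by linarith), smul_eq_mul]
    rw [show (0:ℝ) - (-t) = t by ring]
    ring
  have step1 : (∫ u : ℝ, G u) =
      (∫ u : ℝ, (c ^ 2 * r ^ 2 * Real.exp (-(2 / b) * |u|) +
        c ^ 2 * r ^ 2 * Real.exp (-(2 / b) * |u + t|))) +
      ∫ u : ℝ, Set.indicator (Icc (-t) 0) (fun _ : ℝ => 4 * c ^ 2) u :=
    integral_add (hint1.add hint2) hint3
  have step2 : (∫ u : ℝ, (c ^ 2 * r ^ 2 * Real.exp (-(2 / b) * |u|) +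
        c ^ 2 * r ^ 2 * Real.exp (-(2 / b) * |u + t|))) =
      (∫ u : ℝ, c ^ 2 * r ^ 2 * Real.exp (-(2 / b) * |u|)) +
      ∫ u : ℝ, c ^ 2 * r ^ 2 * Real.exp (-(2 / b) * |u + t|) :=
    integral_add hint1 hint2
  clear_value c r G
  have hGval : (∫ u : ℝ, G u) = 2 * (c ^ 2 * r ^ 2 * (2 / (2 / b))) + 4 * c ^ 2 * t := by
    rw [step1, step2, e1, e2, e3]; ring
  have hfinal : 2 * (c ^ 2 * r ^ 2 * (2 / (2 / b))) + 4 * c ^ 2 * t ≤ 2 * t / b ^ 4 := by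
    have hb2 : (2:ℝ) / (2 / b) = b := by field_simp
    have hr2 : r ^ 2 ≤ t / b := by
      have h1 : r ^ 2 ≤ r := by nlinarith [mul_nonneg hr0 (sub_nonneg.mpr hr1)]
      linarith
    have hrb : r ^ 2 * b ≤ t := by
      calc r ^ 2 * b ≤ (t / b) * b := mul_le_mul_of_nonneg_right hr2 hb.le
        _ = t := div_mul_cancel₀ t hb.ne'
    have hexpand : 2 * (c ^ 2 * r ^ 2 * (2 / (2 / b))) + 4 * c ^ 2 * t
        = (r ^ 2 * b) / (2 * b ^ 4) + t / b ^ 4 := by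
      rw [hb2, hc]; field_simp; ring
    rw [hexpand]
    have l1 : (r ^ 2 * b) / (2 * b ^ 4) ≤ t / b ^ 4 := by
      rw [div_le_div_iff₀ (by positivity) (by positivity)]
      nlinarith [pow_pos hb 4, hrb]
    have l2 : t / b ^ 4 + t / b ^ 4 = 2 * t / b ^ 4 := by ring
    linarith
  calc (∫ u : ℝ,
        ((-Real.sign (u + t) * c * Real.exp (-|u + t| / b)) -
          (-Real.sign u * c * Real.exp (-|u| / b))) ^ 2)
      ≤ ∫ u : ℝ, G u := hmono
    _ = 2 * (c ^ 2 * r ^ 2 * (2 / (2 / b))) + 4 * c ^ 2 * t := hGval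
    _ ≤ 2 * t / b ^ 4 := hfinal

/-- The weak derivative `g(u) = −sgn(u) (1/(2b²)) exp(−|u|/b)` of the Laplace density
satisfies the Nikol'ski condition of order `1/2`:
`(∫ (g(u+t) − g(u))² du)^{1/2} ≤ (√2 / b²) |t|^{1/2}`, i.e. the Laplace density lies in
the weak Nikol'ski class `N̄(1.5, √2/b²)`. -/
theorem laplace_weak_nikolski (b : ℝ) (hb : 0 < b) (t : ℝ) :
    Real.sqrt (∫ u : ℝ,
        ((-Real.sign (u + t) * (1 / (2 * b ^ 2)) * Real.exp (-|u + t| / b)) -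
          (-Real.sign u * (1 / (2 * b ^ 2)) * Real.exp (-|u| / b))) ^ 2)
      ≤ (Real.sqrt 2 / b ^ 2) * Real.sqrt |t| := by
  have key : (∫ u : ℝ,
        ((-Real.sign (u + t) * (1 / (2 * b ^ 2)) * Real.exp (-|u + t| / b)) -
          (-Real.sign u * (1 / (2 * b ^ 2)) * Real.exp (-|u| / b))) ^ 2)
      ≤ 2 * |t| / b ^ 4 := by
    rcases le_total 0 t with h | h
    · rw [abs_of_nonneg h]; exact laplace_key b hb t h
    · have h' : 0 ≤ -t := by linarith
      have hkey := laplace_key b hb (-t) h'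
      have heq : (∫ u : ℝ,
          ((-Real.sign (u + t) * (1 / (2 * b ^ 2)) * Real.exp (-|u + t| / b)) -
            (-Real.sign u * (1 / (2 * b ^ 2)) * Real.exp (-|u| / b))) ^ 2)
          = ∫ u : ℝ,
          ((-Real.sign (u + -t) * (1 / (2 * b ^ 2)) * Real.exp (-|u + -t| / b)) -
            (-Real.sign u * (1 / (2 * b ^ 2)) * Real.exp (-|u| / b))) ^ 2 := by
        rw [← integral_add_right_eq_self (fun u : ℝ =>
          ((-Real.sign (u + t) * (1 / (2 * b ^ 2)) * Real.exp (-|u + t| / b)) -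
            (-Real.sign u * (1 / (2 * b ^ 2)) * Real.exp (-|u| / b))) ^ 2) (-t)]
        congr 1
        ext u
        rw [show u + -t + t = u by ring]
        ring
      rw [heq, abs_of_nonpos h]
      exact hkey
  have hrhs : Real.sqrt (2 * |t| / b ^ 4) = Real.sqrt 2 / b ^ 2 * Real.sqrt |t| := by
    rw [show 2 * |t| / b ^ 4 = (Real.sqrt 2 / b ^ 2 * Real.sqrt |t|) ^ 2 by
      rw [mul_pow, div_pow, Real.sq_sqrt (by norm_num : (0:ℝ) ≤ 2),
        Real.sq_sqrt (abs_nonneg t)]; ring]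
    exact Real.sqrt_sq (by positivity)
  calc Real.sqrt (∫ u : ℝ,
        ((-Real.sign (u + t) * (1 / (2 * b ^ 2)) * Real.exp (-|u + t| / b)) -
          (-Real.sign u * (1 / (2 * b ^ 2)) * Real.exp (-|u| / b))) ^ 2)
      ≤ Real.sqrt (2 * |t| / b ^ 4) := Real.sqrt_le_sqrt key
    _ = Real.sqrt 2 / b ^ 2 * Real.sqrt |t| := hrhs
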